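/- Let ρ(z) = −conj(z) and let υ : S¹ × S¹ × D² → S¹ × S¹ × D² be the involution υ(t,z,w) = (ρ(t), conj(z), w). Then the quotient topological space of S¹ × S¹ × D² by the equivalence relation identifying a point with its image under υ is homeomorphic to S² × D², the product of the unit 2-sphere in ℝ³ with the closed unit disk. -/

import Mathlib

/-- The unit circle in the complex plane. -/
def S1 : Set ℂ := {z : ℂ | ‖z‖ = 1}

/-- The closed unit disk in the complex plane. -/
def D2 : Set ℂ := {w : ℂ | ‖w‖ ≤ 1}

/-- The involution `υ(t,z,w) = (ρ(t), conj z, w)` of `S¹ × S¹ × D²`, where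
`ρ(t) = −conj t` is reflection in the imaginary axis. -/
def upsilon (p : ↥(S1 ×ˢ S1 ×ˢ D2)) : ↥(S1 ×ˢ S1 ×ˢ D2) :=
  ⟨(-(starRingEnd ℂ) p.val.1, (starRingEnd ℂ) p.val.2.1, p.val.2.2), by
    obtain ⟨h1, h2, h3⟩ := p.property
    simp only [S1, D2, Set.mem_prod, Set.mem_setOf_eq] at *
    exact ⟨by simp [h1], by simp [h2], h3⟩⟩

noncomputable section StmtAux

/-- The invariant vector map. -/
noncomputable def vm (t z : ℂ) : EuclideanSpace ℝ (Fin 3) :=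
  (WithLp.equiv 2 (Fin 3 → ℝ)).symm ![t.im, z.re, t.re * z.im]

lemma vm_apply0 (t z : ℂ) : vm t z 0 = t.im := rfl
lemma vm_apply1 (t z : ℂ) : vm t z 1 = z.re := rfl
lemma vm_apply2 (t z : ℂ) : vm t z 2 = t.re * z.im := rfl

lemma abs_eq_one_iff (t : ℂ) : ‖t‖ = 1 ↔ t.re ^ 2 + t.im ^ 2 = 1 := by
  have h : ‖t‖ ^ 2 = t.re ^ 2 + t.im ^ 2 := by
    rw [Complex.sq_norm, Complex.normSq_apply]; ring
  have h0 : (0:ℝ) ≤ ‖t‖ := norm_nonneg _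
  constructor
  · intro he; nlinarith
  · intro he; nlinarith

lemma norm_vm_sq (t z : ℂ) (ht : ‖t‖ = 1) (hz : ‖z‖ = 1) :
    ‖vm t z‖ ^ 2 = 1 + t.im ^ 2 * z.re ^ 2 := by
  rw [abs_eq_one_iff] at ht hz
  have h0 : ‖vm t z 0‖ ^ 2 = t.im ^ 2 := by rw [vm_apply0, Real.norm_eq_abs, sq_abs]
  have h1 : ‖vm t z 1‖ ^ 2 = z.re ^ 2 := by rw [vm_apply1, Real.norm_eq_abs, sq_abs]
  have h2 : ‖vm t z 2‖ ^ 2 = (t.re * z.im) ^ 2 := by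
    rw [vm_apply2, Real.norm_eq_abs, sq_abs]
  rw [EuclideanSpace.norm_eq, Real.sq_sqrt (by positivity), Fin.sum_univ_three,
    h0, h1, h2]
  linear_combination (z.im ^ 2) * ht + (1 - t.im ^ 2) * hz

lemma norm_vm_pos (t z : ℂ) (ht : ‖t‖ = 1) (hz : ‖z‖ = 1) :
    0 < ‖vm t z‖ := by
  have h := norm_vm_sq t z ht hz
  nlinarith [norm_nonneg (vm t z), sq_nonneg (t.im * z.re)]

/-- The map to `S² × D²`. -/
noncomputable def Fmap (q : ↥(S1 ×ˢ S1 ×ˢ D2)) :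
    ↥(Metric.sphere (0 : EuclideanSpace ℝ (Fin 3)) 1) × ↥D2 :=
  (⟨‖vm q.val.1 q.val.2.1‖⁻¹ • vm q.val.1 q.val.2.1, by
      obtain ⟨h1, h2, h3⟩ := q.property
      have hp := norm_vm_pos q.val.1 q.val.2.1 h1 h2
      rw [mem_sphere_zero_iff_norm, norm_smul, Real.norm_eq_abs,
        abs_of_nonneg (inv_nonneg.mpr hp.le), inv_mul_cancel₀ hp.ne']⟩,
   ⟨q.val.2.2, q.property.2.2⟩)

lemma Fmap_upsilon (a : ↥(S1 ×ˢ S1 ×ˢ D2)) : Fmap (upsilon a) = Fmap a := by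
  have hv : vm (upsilon a).val.1 (upsilon a).val.2.1 = vm a.val.1 a.val.2.1 := by
    show vm (-(starRingEnd ℂ) a.val.1) ((starRingEnd ℂ) a.val.2.1) = vm a.val.1 a.val.2.1
    unfold vm
    have e1 : (-(starRingEnd ℂ) a.val.1).im = a.val.1.im := by simp
    have e2 : ((starRingEnd ℂ) a.val.2.1).re = a.val.2.1.re := by simp
    have e3 : (-(starRingEnd ℂ) a.val.1).re * ((starRingEnd ℂ) a.val.2.1).im
        = a.val.1.re * a.val.2.1.im := by simp
    rw [e1, e2, e3]
  refine Prod.ext_iff.mpr ⟨Subtype.ext ?_, Subtype.ext ?_⟩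
  · show ‖vm (upsilon a).val.1 (upsilon a).val.2.1‖⁻¹ • vm (upsilon a).val.1 (upsilon a).val.2.1
      = ‖vm a.val.1 a.val.2.1‖⁻¹ • vm a.val.1 a.val.2.1
    rw [hv]
  · rfl

lemma lam_eq_one {y u c l : ℝ} (hy : y ^ 2 ≤ 1) (hu : u ^ 2 ≤ 1)
    (hy' : (l * y) ^ 2 ≤ 1) (hu' : (l * u) ^ 2 ≤ 1)
    (h : c ^ 2 = (1 - y ^ 2) * (1 - u ^ 2))
    (h' : (l * c) ^ 2 = (1 - (l * y) ^ 2) * (1 - (l * u) ^ 2))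
    (hl : 0 < l) : l = 1 := by
  have key : (l ^ 2 - 1) * (l ^ 2 * (y ^ 2 * u ^ 2) - 1) = 0 := by nlinarith [h, h']
  rcases mul_eq_zero.mp key with hk | hk
  · nlinarith
  · have h1 : l ^ 2 * y ^ 2 = 1 := by nlinarith
    have h2 : u ^ 2 = 1 := by nlinarith
    nlinarith

lemma sq_cases {x x' : ℝ} (h : x' ^ 2 = x ^ 2) : x' = x ∨ x' = -x := by
  have : (x' - x) * (x' + x) = 0 := by nlinarith
  rcases mul_eq_zero.mp this with h | h
  · left; linarith
  · right; linarith

set_option maxHeartbeats 2000000 in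
lemma inj_core {x y u v x' y' u' v' l : ℝ}
    (h1 : x ^ 2 + y ^ 2 = 1) (h2 : u ^ 2 + v ^ 2 = 1)
    (h1' : x' ^ 2 + y' ^ 2 = 1) (h2' : u' ^ 2 + v' ^ 2 = 1)
    (hl : 0 < l) (e0 : y' = l * y) (e1 : u' = l * u) (e2 : x' * v' = l * (x * v)) :
    (y' = y ∧ u' = u) ∧ ((x' = x ∧ v' = v) ∨ (x' = -x ∧ v' = -v)) := by
  have hyle : y ^ 2 ≤ 1 := by nlinarith [sq_nonneg x]
  have hule : u ^ 2 ≤ 1 := by nlinarith [sq_nonneg v]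
  have hyle' : (l * y) ^ 2 ≤ 1 := by rw [← e0]; nlinarith [sq_nonneg x']
  have hule' : (l * u) ^ 2 ≤ 1 := by rw [← e1]; nlinarith [sq_nonneg v']
  have hceq : (x * v) ^ 2 = (1 - y ^ 2) * (1 - u ^ 2) := by nlinarith
  have hceq' : (l * (x * v)) ^ 2 = (1 - (l * y) ^ 2) * (1 - (l * u) ^ 2) := by
    rw [← e0, ← e1, ← e2]; nlinarith
  have hl1 : l = 1 := lam_eq_one hyle hule hyle' hule' hceq hceq' hl
  rw [hl1, one_mul] at e0 e1 e2
  refine ⟨⟨e0, e1⟩, ?_⟩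
  have hx2 : x' ^ 2 = x ^ 2 := by rw [e0] at h1'; linarith
  have hv2 : v' ^ 2 = v ^ 2 := by rw [e1] at h2'; linarith
  rcases sq_cases hx2 with hx | hx <;> rcases sq_cases hv2 with hv | hv
  · exact Or.inl ⟨hx, hv⟩
  · by_cases hx0 : x = 0
    · exact Or.inr ⟨by rw [hx, hx0, neg_zero], hv⟩
    · have hz0 : v = 0 := by
        rw [hx, hv] at e2
        rcases mul_eq_zero.mp (show x * v = 0 by nlinarith) with h' | h'
        · exact absurd h' hx0
        · exact h'
      exact Or.inl ⟨hx, by rw [hv, hz0, neg_zero]⟩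
  · by_cases hv0 : v = 0
    · exact Or.inr ⟨hx, by rw [hv, hv0, neg_zero]⟩
    · have hx0 : x = 0 := by
        rw [hx, hv] at e2
        rcases mul_eq_zero.mp (show x * v = 0 by nlinarith) with h' | h'
        · exact h'
        · exact absurd h' hv0
      exact Or.inl ⟨by rw [hx, hx0, neg_zero], hv⟩
  · exact Or.inr ⟨hx, hv⟩

set_option maxHeartbeats 1000000 in
lemma Fmap_inj (a b : ↥(S1 ×ˢ S1 ×ˢ D2)) (h : Fmap a = Fmap b) :
    a = b ∨ b = upsilon a := by
  obtain ⟨ha1, ha2, ha3⟩ := a.property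
  obtain ⟨hb1, hb2, hb3⟩ := b.property
  simp only [S1, Set.mem_setOf_eq] at ha1 ha2 hb1 hb2
  set t := a.val.1 with htd
  set z := a.val.2.1 with hzd
  set t' := b.val.1 with htd'
  set z' := b.val.2.1 with hzd'
  have hw : a.val.2.2 = b.val.2.2 := congrArg (fun p => (p.2 : ℂ)) h
  have hs : ‖vm t z‖⁻¹ • vm t z = ‖vm t' z'‖⁻¹ • vm t' z' :=
    congrArg (fun p => (p.1 : EuclideanSpace ℝ (Fin 3))) h
  have hpa := norm_vm_pos t z ha1 ha2
  have hpb := norm_vm_pos t' z' hb1 hb2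
  obtain ⟨l, hlpos, hcomp⟩ : ∃ l : ℝ, 0 < l ∧ ∀ i, vm t' z' i = l * vm t z i := by
    refine ⟨‖vm t' z'‖ / ‖vm t z‖, div_pos hpb hpa, fun i => ?_⟩
    have h0 := congrArg (fun v => v i) hs
    simp only [PiLp.smul_apply, smul_eq_mul] at h0
    have h2 : vm t' z' i = ‖vm t' z'‖ * (‖vm t z‖⁻¹ * vm t z i) := by
      rw [h0, ← mul_assoc, mul_inv_cancel₀ hpb.ne', one_mul]
    rw [h2, div_eq_mul_inv]; ring
  have e0 : t'.im = l * t.im := by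
    have := hcomp 0; rwa [vm_apply0, vm_apply0] at this
  have e1 : z'.re = l * z.re := by
    have := hcomp 1; rwa [vm_apply1, vm_apply1] at this
  have e2 : t'.re * z'.im = l * (t.re * z.im) := by
    have := hcomp 2; rwa [vm_apply2, vm_apply2] at this
  rw [abs_eq_one_iff] at ha1 ha2 hb1 hb2
  obtain ⟨⟨f0, f1⟩, claim⟩ := inj_core ha1 ha2 hb1 hb2 hlpos e0 e1 e2
  rcases claim with ⟨hx, hv⟩ | ⟨hx, hv⟩
  · left
    apply Subtype.ext
    show (a.val.1, a.val.2.1, a.val.2.2) = (b.val.1, b.val.2.1, b.val.2.2)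
    have h1 : t' = t := Complex.ext hx f0
    have h2 : z' = z := Complex.ext f1 hv
    rw [← htd, ← hzd, ← htd', ← hzd', h1, h2, hw]
  · right
    apply Subtype.ext
    show (b.val.1, b.val.2.1, b.val.2.2)
      = (-(starRingEnd ℂ) a.val.1, (starRingEnd ℂ) a.val.2.1, a.val.2.2)
    have h1 : t' = -(starRingEnd ℂ) t := by
      apply Complex.ext
      · simpa using hx
      · simpa using f0
    have h2 : z' = (starRingEnd ℂ) z := by
      apply Complex.ext
      · simpa using f1
      · simpa using hv
    rw [← htd, ← hzd, ← htd', ← hzd', h1, h2, hw]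

set_option maxHeartbeats 2000000 in
lemma surj_core (A B D : ℝ) (hnorm : A ^ 2 + B ^ 2 + D ^ 2 = 1) :
    ∃ x y u v s : ℝ, x ^ 2 + y ^ 2 = 1 ∧ u ^ 2 + v ^ 2 = 1 ∧ 0 < s ∧
      y = s * A ∧ u = s * B ∧ x * v = s * D ∧
      y ^ 2 + u ^ 2 + (x * v) ^ 2 = s ^ 2 := by
  have hq : 4 * A ^ 2 * B ^ 2 ≤ 1 := by nlinarith [sq_nonneg (A^2 - B^2), sq_nonneg D]
  set r := Real.sqrt (1 - 4 * A ^ 2 * B ^ 2) with hrd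
  have hr0 : 0 ≤ r := Real.sqrt_nonneg _
  have hr2 : r ^ 2 = 1 - 4 * A ^ 2 * B ^ 2 := Real.sq_sqrt (by linarith)
  have h1r : (0:ℝ) < 1 + r := by linarith
  set s := Real.sqrt (2 / (1 + r)) with hsd
  have hs2 : s ^ 2 = 2 / (1 + r) := Real.sq_sqrt (by positivity)
  have hspos : 0 < s := Real.sqrt_pos.mpr (by positivity)
  clear_value r s
  have key1 : s ^ 2 = 1 + s ^ 4 * (A ^ 2 * B ^ 2) := by
    have h4 : s ^ 4 = (2 / (1 + r)) ^ 2 := by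
      rw [show s ^ 4 = (s ^ 2) ^ 2 by ring, hs2]
    rw [hs2, h4]
    field_simp
    nlinarith [hr2]
  set y := s * A with hyd
  set u := s * B with hud
  set c := s * D with hcd
  have hra : r ^ 2 ≥ (2 * A ^ 2 - 1) ^ 2 := by nlinarith [sq_nonneg (A * D)]
  have hra' : 2 * A ^ 2 - 1 ≤ r := by nlinarith
  have hrb : r ^ 2 ≥ (2 * B ^ 2 - 1) ^ 2 := by nlinarith [sq_nonneg (B * D)]
  have hrb' : 2 * B ^ 2 - 1 ≤ r := by nlinarith
  have hy1 : y ^ 2 ≤ 1 := by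
    rw [hyd, mul_pow, hs2, div_mul_eq_mul_div, div_le_one h1r]
    linarith
  have hu1 : u ^ 2 ≤ 1 := by
    rw [hud, mul_pow, hs2, div_mul_eq_mul_div, div_le_one h1r]
    linarith
  have hc2 : c ^ 2 = (1 - y ^ 2) * (1 - u ^ 2) := by
    have hcs : c ^ 2 = s ^ 2 * D ^ 2 := by rw [hcd]; ring
    have hD2' : D ^ 2 = 1 - A ^ 2 - B ^ 2 := by linarith
    rw [hcs, hD2', hyd, hud]
    nlinarith [key1]
  set x := Real.sqrt (1 - y ^ 2) with hxd
  have hx0 : 0 ≤ x := Real.sqrt_nonneg _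
  have hx2 : x ^ 2 = 1 - y ^ 2 := Real.sq_sqrt (by linarith)
  clear_value x
  set v : ℝ := if x = 0 then Real.sqrt (1 - u ^ 2) else c / x with hvd
  have hv2 : v ^ 2 = 1 - u ^ 2 := by
    rw [hvd]
    split_ifs with hcase
    · exact Real.sq_sqrt (by linarith)
    · have hxne : x ^ 2 ≠ 0 := pow_ne_zero 2 hcase
      rw [div_pow, hc2, ← hx2]
      field_simp
  have hxv : x * v = c := by
    rw [hvd]
    split_ifs with hcase
    · have hh1 : (1 : ℝ) - y ^ 2 = 0 := by
        have := hx2; rw [hcase] at this; simpa using this.symm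
      have hh2 : c ^ 2 = 0 := by rw [hc2, hh1]; ring
      have hc0 : c = 0 := by nlinarith
      rw [hcase, hc0, zero_mul]
    · field_simp
  refine ⟨x, y, u, v, s, by linarith, by linarith, hspos, hyd, hud,
    by rw [hxv, hcd], ?_⟩
  rw [hxv, hyd, hud, hcd]
  nlinarith [hnorm]

set_option maxHeartbeats 1000000 in
lemma Fmap_surj : Function.Surjective Fmap := by
  rintro ⟨⟨ω, hω⟩, ⟨w, hw⟩⟩
  have hnorm : (ω 0) ^ 2 + (ω 1) ^ 2 + (ω 2) ^ 2 = 1 := by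
    rw [mem_sphere_zero_iff_norm, EuclideanSpace.norm_eq, Fin.sum_univ_three,
      Real.sqrt_eq_one] at hω
    simpa [Real.norm_eq_abs, sq_abs] using hω
  obtain ⟨x, y, u, v, s, h1, h2, hspos, hy, hu, hxv, hsum⟩ :=
    surj_core (ω 0) (ω 1) (ω 2) hnorm
  set t : ℂ := ⟨x, y⟩ with htd
  set z : ℂ := ⟨u, v⟩ with hzd
  have ht : t ∈ S1 := by
    show ‖t‖ = 1
    rw [abs_eq_one_iff]
    exact h1
  have hz : z ∈ S1 := by
    show ‖z‖ = 1
    rw [abs_eq_one_iff]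
    exact h2
  refine ⟨⟨(t, z, w), ⟨ht, hz, hw⟩⟩, ?_⟩
  have h0' : vm t z 0 = y := rfl
  have h1' : vm t z 1 = u := rfl
  have h2' : vm t z 2 = x * v := rfl
  have hnvm : ‖vm t z‖ = s := by
    rw [EuclideanSpace.norm_eq, Fin.sum_univ_three, h0', h1', h2']
    simp only [Real.norm_eq_abs, sq_abs]
    rw [hsum, Real.sqrt_sq hspos.le]
  refine Prod.ext_iff.mpr ⟨Subtype.ext ?_, Subtype.ext rfl⟩
  show ‖vm t z‖⁻¹ • vm t z = ω
  rw [hnvm]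
  apply PiLp.ext; intro i
  have hsm : (s⁻¹ • vm t z) i = s⁻¹ * vm t z i := rfl
  rw [hsm]
  fin_cases i
  · show s⁻¹ * y = ω 0
    rw [hy, inv_mul_cancel_left₀ hspos.ne']
  · show s⁻¹ * u = ω 1
    rw [hu, inv_mul_cancel_left₀ hspos.ne']
  · show s⁻¹ * (x * v) = ω 2
    rw [hxv, inv_mul_cancel_left₀ hspos.ne']

lemma vm_continuous : Continuous fun q : ↥(S1 ×ˢ S1 ×ˢ D2) => vm q.val.1 q.val.2.1 := by
  apply (PiLp.continuous_toLp 2 (fun _ : Fin 3 => ℝ)).comp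
  apply continuous_pi
  intro i
  fin_cases i
  · show Continuous fun q : ↥(S1 ×ˢ S1 ×ˢ D2) => q.val.1.im
    exact Complex.continuous_im.comp (continuous_subtype_val.fst)
  · show Continuous fun q : ↥(S1 ×ˢ S1 ×ˢ D2) => q.val.2.1.re
    exact Complex.continuous_re.comp (continuous_subtype_val.snd.fst)
  · show Continuous fun q : ↥(S1 ×ˢ S1 ×ˢ D2) => q.val.1.re * q.val.2.1.im
    exact (Complex.continuous_re.comp (continuous_subtype_val.fst)).mul
      (Complex.continuous_im.comp (continuous_subtype_val.snd.fst))

lemma Fmap_continuous : Continuous Fmap := by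
  have hne : ∀ q : ↥(S1 ×ˢ S1 ×ˢ D2), ‖vm q.val.1 q.val.2.1‖ ≠ 0 := fun q =>
    (norm_vm_pos q.val.1 q.val.2.1 q.property.1 q.property.2.1).ne'
  apply Continuous.prodMk
  · apply Continuous.subtype_mk
    exact (vm_continuous.norm.inv₀ hne).smul vm_continuous
  · apply Continuous.subtype_mk
    fun_prop

end StmtAux

/-- The quotient of `S¹ × S¹ × D²` by the identification of each point with its
image under `υ` is homeomorphic to `S² × D²`. -/
theorem stmt7 :
    Nonempty (Quot (fun a b => b = upsilon a) ≃ₜ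
      ↥(Metric.sphere (0 : EuclideanSpace ℝ (Fin 3)) 1) × ↥D2) := by
  have hS1 : S1 = Metric.sphere (0 : ℂ) 1 := by
    ext z
    simp [S1, mem_sphere_zero_iff_norm]
  have hD2 : D2 = Metric.closedBall (0 : ℂ) 1 := by
    ext z
    simp [D2, Metric.mem_closedBall, Complex.dist_eq]
  have hcomp : IsCompact (S1 ×ˢ S1 ×ˢ D2) := by
    rw [hS1, hD2]
    exact (isCompact_sphere 0 1).prod ((isCompact_sphere 0 1).prod
      (isCompact_closedBall 0 1))
  have : CompactSpace ↥(S1 ×ˢ S1 ×ˢ D2) := isCompact_iff_compactSpace.mp hcomp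
  have hinv : ∀ a b, (fun a b => b = upsilon a) a b → Fmap a = Fmap b := by
    rintro a b rfl
    exact (Fmap_upsilon a).symm
  set G := Quot.lift Fmap hinv with hG
  have hGc : Continuous G := continuous_quot_lift hinv Fmap_continuous
  have hGbij : Function.Bijective G := by
    constructor
    · intro p q
      induction p using Quot.ind with | _ a =>
      induction q using Quot.ind with | _ b =>
      intro h
      have h' : Fmap a = Fmap b := h
      rcases Fmap_inj a b h' with h | h
      · exact congrArg _ h
      · exact Quot.sound h
    · intro y
      obtain ⟨x, hx⟩ := Fmap_surj y
      exact ⟨Quot.mk _ x, hx⟩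
  exact ⟨Continuous.homeoOfEquivCompactToT2 (f := Equiv.ofBijective G hGbij) hGc⟩
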